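/- For the product of two copies of an irrational circle rotation, the product system does not have first weak shadowing (although each factor has strong orbital shadowing). -/

import Mathlib

open Filter Topology

noncomputable section

lemma addCircle_dist_coe_le (a b : ℝ) :
    dist ((a : AddCircle (1:ℝ))) (b : AddCircle (1:ℝ)) ≤ |a - b| := by
  rw [dist_eq_norm, ← AddCircle.coe_sub]
  simpa [Real.norm_eq_abs] using QuotientAddGroup.norm_mk_le_norm (S := AddSubgroup.zmultiples (1:ℝ)) (m := a - b)

lemma addCircle_dist_half :
    dist ((0:ℝ) : AddCircle (1:ℝ)) (((1:ℝ)/2 : ℝ) : AddCircle (1:ℝ)) = 1/2 := by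
  rw [dist_eq_norm, ← AddCircle.coe_sub]
  have h : ((0:ℝ) - 1/2) = -(1/2) := by norm_num
  rw [h, AddCircle.coe_neg, norm_neg]
  simpa using AddCircle.norm_half_period_eq (p := (1:ℝ))

theorem product_circle_rotation_not_firstWeakShadowing
    (α : ℝ) (hα : Irrational α) :
    ∃ ε > (0:ℝ), ∀ δ > (0:ℝ),
      ∃ z : ℕ → AddCircle (1:ℝ) × AddCircle (1:ℝ),
        (∀ i, dist ((fun p : AddCircle (1:ℝ) × AddCircle (1:ℝ) =>
            (p.1 + (α : AddCircle (1:ℝ)), p.2 + (α : AddCircle (1:ℝ)))) (z i)) (z (i + 1)) < δ) ∧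
        ∀ w : AddCircle (1:ℝ) × AddCircle (1:ℝ), ∃ i, ∀ n : ℕ,
          ε ≤ dist ((fun p : AddCircle (1:ℝ) × AddCircle (1:ℝ) =>
            (p.1 + (α : AddCircle (1:ℝ)), p.2 + (α : AddCircle (1:ℝ))))^[n] w) (z i) := by
  refine ⟨1/8, by norm_num, fun δ hδ => ?_⟩
  set s : ℝ := min δ 1 / 4 with hs_def
  have hs0 : 0 < s := by positivity
  have hsδ : s < δ := by
    have h1 : min δ 1 ≤ δ := min_le_left _ _
    have h2 : 0 < min δ 1 := lt_min hδ one_pos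
    calc s = min δ 1 / 4 := rfl
    _ < min δ 1 := by linarith
    _ ≤ δ := h1
  set d : ℕ → ℝ := fun i => min ((i : ℝ) * s) (1/2) with hd_def
  set z : ℕ → AddCircle (1:ℝ) × AddCircle (1:ℝ) :=
    fun i => ((((i : ℝ) * α : ℝ) : AddCircle (1:ℝ)),
      (((i : ℝ) * α + d i : ℝ) : AddCircle (1:ℝ))) with hz_def
  set f : AddCircle (1:ℝ) × AddCircle (1:ℝ) → AddCircle (1:ℝ) × AddCircle (1:ℝ) :=
    fun p => (p.1 + (α : AddCircle (1:ℝ)), p.2 + (α : AddCircle (1:ℝ))) with hf_def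
  refine ⟨z, fun i => ?_, fun w => ?_⟩
  · -- pseudo-orbit estimate
    have hdd : d i ≤ d (i + 1) := by
      apply min_le_min _ le_rfl
      have : (i:ℝ) ≤ ((i+1:ℕ):ℝ) := by push_cast; linarith
      nlinarith
    have hdd2 : d (i + 1) ≤ d i + s := by
      simp only [hd_def]
      push_cast
      rcases le_total ((i:ℝ)*s) (1/2) with h | h
      · rw [min_eq_left h]
        calc min (((i:ℝ)+1)*s) (1/2) ≤ ((i:ℝ)+1)*s := min_le_left _ _
        _ = (i:ℝ)*s + s := by ring
      · rw [min_eq_right h]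
        have : min (((i:ℝ)+1)*s) (1/2) ≤ 1/2 := min_le_right _ _
        linarith
    have h1 : (((i : ℝ) * α : ℝ) : AddCircle (1:ℝ)) + (α : AddCircle (1:ℝ))
        = ((((i + 1 : ℕ) : ℝ) * α : ℝ) : AddCircle (1:ℝ)) := by
      rw [← AddCircle.coe_add]
      push_cast
      ring_nf
    have h2 : dist ((((i : ℝ) * α + d i : ℝ) : AddCircle (1:ℝ)) + (α : AddCircle (1:ℝ)))
        ((((i + 1 : ℕ) : ℝ) * α + d (i + 1) : ℝ) : AddCircle (1:ℝ)) < δ := by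
      rw [← AddCircle.coe_add]
      refine lt_of_le_of_lt (addCircle_dist_coe_le _ _) ?_
      have he : ((i : ℝ) * α + d i + α) - (((i + 1 : ℕ) : ℝ) * α + d (i + 1))
          = d i - d (i+1) := by push_cast; ring
      rw [he, abs_sub_comm, abs_of_nonneg (by linarith)]
      linarith
    have heq : dist (f (z i)) (z (i+1))
        = max (dist ((z i).1 + (α : AddCircle (1:ℝ))) ((z (i+1)).1))
          (dist ((z i).2 + (α : AddCircle (1:ℝ))) ((z (i+1)).2)) := Prod.dist_eq
    rw [heq]
    apply max_lt
    · simp only [hz_def, h1]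
      simpa using hδ
    · simpa only [hz_def] using h2
  · -- shadowing failure
    have horb : ∀ n : ℕ, f^[n] w
        = (w.1 + n • (α : AddCircle (1:ℝ)), w.2 + n • (α : AddCircle (1:ℝ))) := by
      intro n
      induction n with
      | zero => simp
      | succ n ih =>
        rw [Function.iterate_succ_apply', ih]
        simp [hf_def, succ_nsmul, add_assoc]
    set c : AddCircle (1:ℝ) := w.2 - w.1 with hc_def
    set N : ℕ := ⌈(1/2 : ℝ) / s⌉₊ with hN_def
    have hdN : d N = 1/2 := by
      have h : (1/2 : ℝ) ≤ (N:ℝ) * s := by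
        have := Nat.le_ceil ((1/2 : ℝ) / s)
        calc (1/2:ℝ) = (1/2)/s * s := by field_simp
        _ ≤ (N : ℝ) * s := by
            rw [hN_def]; nlinarith [Nat.le_ceil ((1/2 : ℝ) / s)]
      simp only [hd_def]
      exact min_eq_right h
    have hd0 : d 0 = 0 := by simp [hd_def]
    have hkey : (1/4:ℝ) ≤ dist (((d 0 : ℝ) : AddCircle (1:ℝ))) c
        ∨ (1/4:ℝ) ≤ dist (((d N : ℝ) : AddCircle (1:ℝ))) c := by
      by_contra hcon
      push_neg at hcon
      obtain ⟨ha, hb⟩ := hcon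
      rw [hd0] at ha
      rw [hdN] at hb
      have h12 : dist ((0:ℝ) : AddCircle (1:ℝ)) (((1:ℝ)/2 : ℝ) : AddCircle (1:ℝ)) < 1/2 := by
        calc dist ((0:ℝ) : AddCircle (1:ℝ)) (((1:ℝ)/2 : ℝ) : AddCircle (1:ℝ))
            ≤ dist ((0:ℝ) : AddCircle (1:ℝ)) c
              + dist c ((((1:ℝ)/2 : ℝ)) : AddCircle (1:ℝ)) := dist_triangle _ _ _
        _ < 1/4 + 1/4 := by
            rw [dist_comm c]
            exact add_lt_add ha hb
        _ = 1/2 := by norm_num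
      rw [addCircle_dist_half] at h12
      linarith
    have main : ∀ i : ℕ, (1/4:ℝ) ≤ dist (((d i : ℝ) : AddCircle (1:ℝ))) c →
        ∀ n : ℕ, (1/8:ℝ) ≤ dist (f^[n] w) (z i) := by
      intro i hi n
      by_contra hlt
      push_neg at hlt
      have h1 : dist (f^[n] w).1 (z i).1 < 1/8 :=
        lt_of_le_of_lt (le_trans (le_max_left _ _) (le_of_eq Prod.dist_eq.symm)) hlt
      have h2 : dist (f^[n] w).2 (z i).2 < 1/8 :=
        lt_of_le_of_lt (le_trans (le_max_right _ _) (le_of_eq Prod.dist_eq.symm)) hlt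
      have hsub : dist ((f^[n] w).2 - (f^[n] w).1) ((z i).2 - (z i).1)
          ≤ dist (f^[n] w).2 (z i).2 + dist (f^[n] w).1 (z i).1 := dist_sub_sub_le _ _ _ _
      have hc1 : (f^[n] w).2 - (f^[n] w).1 = c := by
        rw [horb n]
        simp only [hc_def]
        abel
      have hc2 : (z i).2 - (z i).1 = ((d i : ℝ) : AddCircle (1:ℝ)) := by
        simp only [hz_def]
        rw [← AddCircle.coe_sub]
        ring_nf
      rw [hc1, hc2] at hsub
      rw [dist_comm] at hi
      linarith
    rcases hkey with h | h
    · exact ⟨0, main 0 h⟩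
    · exact ⟨N, main N h⟩

end
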